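/- Let G be a k-uniform hypergraph on n vertices without isolated vertices, with average 2-degrees m₁ ≥ m₂ ≥ … ≥ m_n. Then the spectral radius of the adjacency tensor of G satisfies ρ(G) ≤ m₁^{1/k} · m₂^{1−1/k}. -/

import Mathlib

/-- The spectral radius of an order-`k` tensor of dimension `n`: the largest modulus of its
(complex) eigenvalues, where `ρ` is an eigenvalue if `T x = ρ x^{[k-1]}` for some `x ≠ 0`. -/
noncomputable def specRad (n k : ℕ) (T : Fin n → (Fin (k-1) → Fin n) → ℝ) : ℝ :=
  sSup {r : ℝ | ∃ ρ : ℂ, ‖ρ‖ = r ∧ ∃ x : Fin n → ℂ, x ≠ 0 ∧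
    ∀ i, (∑ f : Fin (k-1) → Fin n, (T i f : ℂ) * ∏ a, x (f a)) = ρ * x i ^ (k-1)}

/-- A hypergraph on vertex set `Fin n` is a finite set of edges; `hDeg` is the degree of
vertex `i`, the number of edges containing `i`. -/
def hDeg (n : ℕ) (E : Finset (Finset (Fin n))) (i : Fin n) : ℕ :=
  (E.filter (fun e => i ∈ e)).card

/-- The average 2-degree of vertex `i` in a `k`-uniform hypergraph:
`m_i = (Σ_{{i,i₂,…,i_k} ∈ E_i} d_{i₂} ⋯ d_{i_k}) / d_i^{k-1}`. -/
noncomputable def avg2 (n k : ℕ) (E : Finset (Finset (Fin n))) (i : Fin n) : ℝ :=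
  (∑ e ∈ E.filter (fun e => i ∈ e), ∏ j ∈ e.erase i, (hDeg n E j : ℝ)) /
    (hDeg n E i : ℝ) ^ (k-1)

/-- The adjacency tensor of a `k`-uniform hypergraph: entry `1/(k-1)!` at `(i₁,…,i_k)` when
`{i₁,…,i_k}` is an edge, and `0` otherwise. -/
noncomputable def adjT (n k : ℕ) (E : Finset (Finset (Fin n))) :
    Fin n → (Fin (k-1) → Fin n) → ℝ :=
  fun i f => if insert i (Finset.image f Finset.univ) ∈ E then 1 / (k-1).factorial else 0

/-- The signless Laplacian tensor `Q(G) = D(G) + A(G)`. -/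
noncomputable def qT (n k : ℕ) (E : Finset (Finset (Fin n))) :
    Fin n → (Fin (k-1) → Fin n) → ℝ :=
  fun i f => (if ∀ a, f a = i then (hDeg n E i : ℝ) else 0) + adjT n k E i f

/-- A hypergraph is connected if every pair of distinct vertices is joined by a sequence of
pairwise intersecting edges. -/
def HConn (n : ℕ) (E : Finset (Finset (Fin n))) : Prop :=
  ∀ u v : Fin n, u ≠ v → ∃ r : ℕ, ∃ es : Fin (r+1) → Finset (Fin n),
    (∀ s, es s ∈ E) ∧ u ∈ es 0 ∧ v ∈ es (Fin.last r) ∧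
    ∀ s : Fin r, (es s.castSucc ∩ es s.succ).Nonempty

open Finset

lemma countBound (n k : ℕ) (hk : 2 ≤ k) (s : Finset (Fin n)) (hs : s.card = k - 1) :
    (univ.filter (fun f : Fin (k-1) → Fin n => image f univ = s)).card ≤ (k-1).factorial := by
  have hsne : s.Nonempty := card_pos.mp (by omega)
  obtain ⟨j₀, hj₀⟩ := hsne
  set Φ : (Fin (k-1) → Fin n) → (Fin (k-1) → {x // x ∈ s}) :=
    fun f a => if h : f a ∈ s then ⟨f a, h⟩ else ⟨j₀, hj₀⟩ with hΦ
  have key : ∀ f ∈ univ.filter (fun f : Fin (k-1) → Fin n => image f univ = s),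
      (∀ a, (Φ f a : Fin n) = f a) ∧ Function.Injective (Φ f) := by
    intro f hf
    simp only [mem_filter, mem_univ, true_and] at hf
    have hmem : ∀ a, f a ∈ s := fun a => hf ▸ mem_image_of_mem f (mem_univ a)
    have hval : ∀ a, (Φ f a : Fin n) = f a := fun a => by simp [hΦ, hmem a]
    refine ⟨hval, ?_⟩
    have hinj : Set.InjOn f (univ : Finset (Fin (k-1))) := by
      rw [← card_image_iff, hf, hs, card_univ, Fintype.card_fin]
    intro a b hab
    apply hinj (mem_coe.mpr (mem_univ a)) (mem_coe.mpr (mem_univ b))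
    rw [← hval a, ← hval b, hab]
  calc (univ.filter (fun f : Fin (k-1) → Fin n => image f univ = s)).card
      ≤ (univ.filter (fun g : Fin (k-1) → {x // x ∈ s} => Function.Injective g)).card := by
        apply card_le_card_of_injOn Φ
        · intro f hf; exact mem_coe.mpr (mem_filter.mpr ⟨mem_univ _, (key f (mem_coe.mp hf)).2⟩)
        · intro f hf g hg hfg
          funext a
          have h2 := congrFun hfg a
          calc f a = (Φ f a : Fin n) := ((key f (mem_coe.mp hf)).1 a).symm
          _ = (Φ g a : Fin n) := by rw [h2]
          _ = g a := (key g (mem_coe.mp hg)).1 a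
    _ = (k-1).factorial := by
        rw [← Fintype.card_subtype,
          Fintype.card_congr (Equiv.subtypeInjectiveEquivEmbedding (Fin (k-1)) {x // x ∈ s}),
          Fintype.card_embedding_eq, Fintype.card_coe, hs, Fintype.card_fin,
          Nat.descFactorial_self]

lemma fiber_char (n k : ℕ) (hk : 2 ≤ k) {E : Finset (Finset (Fin n))}
    (hcard : ∀ e ∈ E, e.card = k) {i : Fin n} {e : Finset (Fin n)} (he : e ∈ E)
    {f : Fin (k-1) → Fin n} (hf : insert i (image f univ) = e) :
    image f univ = e.erase i := by
  have hci : (image f univ).card ≤ k - 1 := by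
    calc (image f univ).card ≤ (univ : Finset (Fin (k-1))).card := card_image_le
    _ = k - 1 := by simp
  have hik : i ∉ image f univ := by
    intro h
    rw [insert_eq_self.mpr h] at hf
    rw [hf] at hci
    have := hcard e he
    omega
  apply subset_antisymm
  · intro j hj
    refine mem_erase.mpr ⟨fun hji => hik (hji ▸ hj), ?_⟩
    rw [← hf]; exact mem_insert_of_mem hj
  · intro j hj
    obtain ⟨hji, hje⟩ := mem_erase.mp hj
    rw [← hf] at hje
    rcases mem_insert.mp hje with h | h
    · exact absurd h hji
    · exact h

lemma adjT_nonneg (n k : ℕ) (E : Finset (Finset (Fin n))) (i : Fin n) (f : Fin (k-1) → Fin n) :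
    0 ≤ adjT n k E i f := by
  unfold adjT; split <;> positivity

lemma rowBound (n k : ℕ) (hk : 2 ≤ k) (E : Finset (Finset (Fin n)))
    (hcard : ∀ e ∈ E, e.card = k) (i : Fin n) (w : Fin n → ℝ) (hw : ∀ j, 0 ≤ w j) :
    ∑ f : Fin (k-1) → Fin n, adjT n k E i f * ∏ a, w (f a) ≤
      ∑ e ∈ E.filter (fun e => i ∈ e), ∏ j ∈ e.erase i, w j := by
  have step1 : ∑ f : Fin (k-1) → Fin n, adjT n k E i f * ∏ a, w (f a)
      = ∑ f ∈ univ.filter (fun f : Fin (k-1) → Fin n => insert i (image f univ) ∈ E),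
          (1 / (k-1).factorial : ℝ) * ∏ a, w (f a) := by
    rw [sum_filter]
    apply sum_congr rfl; intro f _
    unfold adjT; split <;> simp_all
  have hmaps : ∀ f ∈ univ.filter (fun f : Fin (k-1) → Fin n => insert i (image f univ) ∈ E),
      insert i (image f univ) ∈ E.filter (fun e => i ∈ e) := by
    intro f hf
    simp only [mem_filter, mem_univ, true_and] at hf ⊢
    exact ⟨hf, mem_insert_self i _⟩
  rw [step1, ← sum_fiberwise_of_maps_to hmaps (fun f => (1 / (k-1).factorial : ℝ) * ∏ a, w (f a))]
  apply sum_le_sum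
  intro e he
  obtain ⟨heE, hie⟩ := mem_filter.mp he
  set S := (univ.filter (fun f : Fin (k-1) → Fin n => insert i (image f univ) ∈ E)).filter
    (fun f => insert i (image f univ) = e) with hS
  have hchar : ∀ f ∈ S, image f univ = e.erase i := by
    intro f hf
    simp only [hS, mem_filter, mem_univ, true_and] at hf
    exact fiber_char n k hk hcard heE hf.2
  have hprod : ∀ f ∈ S, (∏ a, w (f a)) = ∏ j ∈ e.erase i, w j := by
    intro f hf
    have h1 := hchar f hf
    have hinj : ∀ x ∈ (univ : Finset (Fin (k-1))), ∀ y ∈ univ, f x = f y → x = y := by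
      have : Set.InjOn f (univ : Finset (Fin (k-1))) := by
        rw [← card_image_iff, h1, card_erase_of_mem hie, hcard e heE, card_univ, Fintype.card_fin]
      exact fun x hx y hy h => this (mem_coe.mpr hx) (mem_coe.mpr hy) h
    rw [← h1, prod_image hinj]
  have hcardS : S.card ≤ (k-1).factorial := by
    have hsub : S ⊆ univ.filter (fun f : Fin (k-1) → Fin n => image f univ = e.erase i) := by
      intro f hf
      simp only [mem_filter, mem_univ, true_and]
      exact hchar f hf
    calc S.card ≤ _ := card_le_card hsub
    _ ≤ (k-1).factorial := countBound n k hk _ (by rw [card_erase_of_mem hie, hcard e heE])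
  calc ∑ f ∈ S, (1 / (k-1).factorial : ℝ) * ∏ a, w (f a)
      = ∑ f ∈ S, (1 / (k-1).factorial : ℝ) * ∏ j ∈ e.erase i, w j := by
        apply sum_congr rfl; intro f hf; rw [hprod f hf]
    _ = (S.card : ℝ) * ((1 / (k-1).factorial : ℝ) * ∏ j ∈ e.erase i, w j) := by
        rw [sum_const, nsmul_eq_mul]
    _ ≤ ((k-1).factorial : ℝ) * ((1 / (k-1).factorial : ℝ) * ∏ j ∈ e.erase i, w j) := by
        apply mul_le_mul_of_nonneg_right (by exact_mod_cast hcardS)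
        exact mul_nonneg (by positivity) (prod_nonneg fun j _ => hw j)
    _ = ∏ j ∈ e.erase i, w j := by
        rw [← mul_assoc, mul_one_div, div_self (by positivity), one_mul]

lemma avg2_nonneg (n k : ℕ) (E : Finset (Finset (Fin n))) (i : Fin n) :
    0 ≤ avg2 n k E i := by
  unfold avg2
  apply div_nonneg
  · exact sum_nonneg fun e _ => prod_nonneg fun j _ => Nat.cast_nonneg _
  · positivity


set_option maxHeartbeats 2000000 in
theorem stmt3 (n k : ℕ) (hk : 2 ≤ k) (hkn : k ≤ n)
    (E : Finset (Finset (Fin n))) (hcard : ∀ e ∈ E, e.card = k)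
    (hiso : ∀ i : Fin n, 0 < hDeg n E i)
    (hsort : ∀ i j : Fin n, i ≤ j → avg2 n k E j ≤ avg2 n k E i) :
    specRad n k (adjT n k E) ≤
      (avg2 n k E ⟨0, by omega⟩) ^ ((1 : ℝ)/k) *
        (avg2 n k E ⟨1, by omega⟩) ^ (1 - (1 : ℝ)/k) := by
  have hn2 : 2 ≤ n := hk.trans hkn
  set M1 := avg2 n k E ⟨0, by omega⟩ with hM1def
  set M2 := avg2 n k E ⟨1, by omega⟩ with hM2def
  have hM1nn : 0 ≤ M1 := avg2_nonneg n k E _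
  have hM2nn : 0 ≤ M2 := avg2_nonneg n k E _
  have hRHS : 0 ≤ M1 ^ ((1:ℝ)/k) * M2 ^ (1 - (1:ℝ)/k) :=
    mul_nonneg (Real.rpow_nonneg hM1nn _) (Real.rpow_nonneg hM2nn _)
  apply Real.sSup_le _ hRHS
  rintro r ⟨ρ, hρ, x, hx0, heig⟩
  have hr0 : 0 ≤ r := hρ ▸ norm_nonneg ρ
  -- reduce to the power inequality
  suffices hkey : r ^ k ≤ M1 * M2 ^ (k-1) by
    have hk0 : (k:ℝ) ≠ 0 := by positivity
    have h1 : ((r ^ k : ℝ)) ^ ((1:ℝ)/k) ≤ (M1 * M2 ^ (k-1)) ^ ((1:ℝ)/k) :=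
      Real.rpow_le_rpow (pow_nonneg hr0 k) hkey (by positivity)
    have h2 : ((r ^ k : ℝ)) ^ ((1:ℝ)/k) = r := by
      rw [← Real.rpow_natCast r k, ← Real.rpow_mul hr0, mul_one_div, div_self hk0,
        Real.rpow_one]
    have h3 : (M1 * M2 ^ (k-1)) ^ ((1:ℝ)/k)
        = M1 ^ ((1:ℝ)/k) * M2 ^ (1 - (1:ℝ)/k) := by
      rw [Real.mul_rpow hM1nn (pow_nonneg hM2nn _)]
      congr 1
      rw [← Real.rpow_natCast M2 (k-1), ← Real.rpow_mul hM2nn]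
      congr 1
      rw [Nat.cast_sub (by omega : 1 ≤ k), Nat.cast_one]
      field_simp
    rw [h2, h3] at h1
    exact h1
  -- setup
  obtain ⟨m, rfl⟩ : ∃ m, k = m + 2 := ⟨k - 2, by omega⟩
  have hmk1 : m + 2 - 1 = m + 1 := rfl
  have hmk2 : m + 2 - 2 = m := rfl
  set d : Fin n → ℝ := fun j => (hDeg n E j : ℝ) with hddef
  have hd : ∀ j, 0 < d j := fun j => by
    show (0:ℝ) < (hDeg n E j : ℝ)
    exact_mod_cast hiso j
  set z : Fin n → ℝ := fun j => ‖x j‖ / d j with hzdef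
  have hz0 : ∀ j, 0 ≤ z j := fun j => div_nonneg (norm_nonneg _) (hd j).le
  have hxz : ∀ j, ‖x j‖ = d j * z j := fun j => (mul_div_cancel₀ _ (hd j).ne').symm
  obtain ⟨p, -, hpmax⟩ := Finset.exists_max_image univ z ⟨⟨0, by omega⟩, mem_univ _⟩
  have hp' : ∀ j, z j ≤ z p := fun j => hpmax j (mem_univ j)
  have hne : (univ.erase p).Nonempty := by
    rw [← card_pos, card_erase_of_mem (mem_univ p), card_univ, Fintype.card_fin]; omega
  obtain ⟨q, hqmem, hqmax⟩ := Finset.exists_max_image (univ.erase p) z hne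
  have hqp : q ≠ p := (mem_erase.mp hqmem).1
  have hq' : ∀ j, j ≠ p → z j ≤ z q := fun j hj => hqmax j (mem_erase.mpr ⟨hj, mem_univ j⟩)
  -- per-vertex inequality
  have hvert : ∀ i, r * (d i * z i) ^ (m+1) ≤
      ∑ e ∈ E.filter (fun e => i ∈ e), ∏ j ∈ e.erase i, (d j * z j) := by
    intro i
    have h1 : ‖ρ * x i ^ (m+1)‖ = r * (d i * z i) ^ (m+1) := by
      rw [norm_mul, norm_pow, hρ, hxz]
    have h2 : (∑ f : Fin (m + 2 - 1) → Fin n, ((adjT n (m+2) E i f : ℝ) : ℂ) * ∏ a, x (f a))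
        = ρ * x i ^ (m + 1) := heig i
    rw [← h1, ← h2]
    calc ‖∑ f : Fin (m+2-1) → Fin n, ((adjT n (m+2) E i f : ℝ) : ℂ) * ∏ a, x (f a)‖
        ≤ ∑ f : Fin (m+2-1) → Fin n,
            ‖((adjT n (m+2) E i f : ℝ) : ℂ) * ∏ a, x (f a)‖ :=
          norm_sum_le _ _
      _ = ∑ f : Fin (m+2-1) → Fin n, adjT n (m+2) E i f * ∏ a, (fun j => d j * z j) (f a) := by
          apply sum_congr rfl; intro f _
          rw [norm_mul, norm_prod]
          congr 1
          · rw [Complex.norm_real, Real.norm_eq_abs, abs_of_nonneg (adjT_nonneg n (m+2) E i f)]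
          · exact prod_congr rfl fun a _ => hxz (f a)
      _ ≤ _ := rowBound n (m+2) hk E hcard i _ (fun j => mul_nonneg (hd j).le (hz0 j))
  -- degree sum identity
  have hsum_d : ∀ i : Fin n, ∑ e ∈ E.filter (fun e => i ∈ e), ∏ j ∈ e.erase i, d j
      = avg2 n (m+2) E i * d i ^ (m+1) := by
    intro i
    rw [avg2, hmk1]
    exact (div_mul_cancel₀ _ (pow_pos (hd i) (m+1)).ne').symm
  -- inequality at p
  have ineq1 : r * z p ^ (m+1) ≤ avg2 n (m+2) E p * z q ^ (m+1) := by
    have hbig : r * (d p * z p) ^ (m+1) ≤ avg2 n (m+2) E p * d p ^ (m+1) * z q ^ (m+1) := by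
      refine (hvert p).trans ?_
      calc ∑ e ∈ E.filter (fun e => p ∈ e), ∏ j ∈ e.erase p, (d j * z j)
          ≤ ∑ e ∈ E.filter (fun e => p ∈ e), (∏ j ∈ e.erase p, d j) * z q ^ (m+1) := by
            apply sum_le_sum
            intro e he
            obtain ⟨heE, hpe⟩ := mem_filter.mp he
            have hce : (e.erase p).card = m+1 := by
              rw [card_erase_of_mem hpe, hcard e heE]; omega
            calc ∏ j ∈ e.erase p, (d j * z j) ≤ ∏ j ∈ e.erase p, (d j * z q) := by
                  apply prod_le_prod (fun j _ => mul_nonneg (hd j).le (hz0 j))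
                  intro j hj
                  exact mul_le_mul_of_nonneg_left (hq' j (mem_erase.mp hj).1) (hd j).le
              _ = (∏ j ∈ e.erase p, d j) * z q ^ (m+1) := by
                  rw [prod_mul_distrib, prod_const, hce]
        _ = (∑ e ∈ E.filter (fun e => p ∈ e), ∏ j ∈ e.erase p, d j) * z q ^ (m+1) := by
            rw [← sum_mul]
        _ = avg2 n (m+2) E p * d p ^ (m+1) * z q ^ (m+1) := by rw [hsum_d p]
    have h2 : (r * z p ^ (m+1)) * d p ^ (m+1)
        ≤ (avg2 n (m+2) E p * z q ^ (m+1)) * d p ^ (m+1) := by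
      calc (r * z p ^ (m+1)) * d p ^ (m+1) = r * (d p * z p) ^ (m+1) := by ring
        _ ≤ avg2 n (m+2) E p * d p ^ (m+1) * z q ^ (m+1) := hbig
        _ = (avg2 n (m+2) E p * z q ^ (m+1)) * d p ^ (m+1) := by ring
    exact le_of_mul_le_mul_right h2 (pow_pos (hd p) (m+1))
  -- inequality at q
  have ineq2 : r * z q ^ (m+1) ≤ avg2 n (m+2) E q * (z p * z q ^ m) := by
    have hbig : r * (d q * z q) ^ (m+1)
        ≤ avg2 n (m+2) E q * d q ^ (m+1) * (z p * z q ^ m) := by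
      refine (hvert q).trans ?_
      calc ∑ e ∈ E.filter (fun e => q ∈ e), ∏ j ∈ e.erase q, (d j * z j)
          ≤ ∑ e ∈ E.filter (fun e => q ∈ e), (∏ j ∈ e.erase q, d j) * (z p * z q ^ m) := by
            apply sum_le_sum
            intro e he
            obtain ⟨heE, hqe⟩ := mem_filter.mp he
            have hce : (e.erase q).card = m+1 := by
              rw [card_erase_of_mem hqe, hcard e heE]; omega
            by_cases hpq : p ∈ e.erase q
            · have hsplit := (mul_prod_erase (e.erase q) (fun j => d j * z j) hpq).symm
              have hsplitd := (mul_prod_erase (e.erase q) d hpq).symm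
              have hce2 : ((e.erase q).erase p).card = m := by
                rw [card_erase_of_mem hpq, hce]; omega
              calc ∏ j ∈ e.erase q, (d j * z j)
                  = (d p * z p) * ∏ j ∈ (e.erase q).erase p, (d j * z j) := hsplit
                _ ≤ (d p * z p) * ∏ j ∈ (e.erase q).erase p, (d j * z q) := by
                    apply mul_le_mul_of_nonneg_left ?_ (mul_nonneg (hd p).le (hz0 p))
                    apply prod_le_prod (fun j _ => mul_nonneg (hd j).le (hz0 j))
                    intro j hj
                    exact mul_le_mul_of_nonneg_left (hq' j (mem_erase.mp hj).1) (hd j).le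
                _ = (d p * z p) * ((∏ j ∈ (e.erase q).erase p, d j) * z q ^ m) := by
                    rw [prod_mul_distrib, prod_const, hce2]
                _ = (d p * ∏ j ∈ (e.erase q).erase p, d j) * (z p * z q ^ m) := by ring
                _ = (∏ j ∈ e.erase q, d j) * (z p * z q ^ m) := by rw [← hsplitd]
            · calc ∏ j ∈ e.erase q, (d j * z j) ≤ ∏ j ∈ e.erase q, (d j * z q) := by
                    apply prod_le_prod (fun j _ => mul_nonneg (hd j).le (hz0 j))
                    intro j hj
                    have hjp : j ≠ p := fun h => hpq (h ▸ hj)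
                    exact mul_le_mul_of_nonneg_left (hq' j hjp) (hd j).le
                _ = (∏ j ∈ e.erase q, d j) * z q ^ (m+1) := by
                    rw [prod_mul_distrib, prod_const, hce]
                _ = (∏ j ∈ e.erase q, d j) * (z q * z q ^ m) := by ring
                _ ≤ (∏ j ∈ e.erase q, d j) * (z p * z q ^ m) := by
                    apply mul_le_mul_of_nonneg_left ?_ (prod_nonneg fun j _ => (hd j).le)
                    exact mul_le_mul_of_nonneg_right (hp' q) (pow_nonneg (hz0 q) m)
        _ = (∑ e ∈ E.filter (fun e => q ∈ e), ∏ j ∈ e.erase q, d j) * (z p * z q ^ m) := by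
            rw [← sum_mul]
        _ = avg2 n (m+2) E q * d q ^ (m+1) * (z p * z q ^ m) := by rw [hsum_d q]
    have h2 : (r * z q ^ (m+1)) * d q ^ (m+1)
        ≤ (avg2 n (m+2) E q * (z p * z q ^ m)) * d q ^ (m+1) := by
      calc (r * z q ^ (m+1)) * d q ^ (m+1) = r * (d q * z q) ^ (m+1) := by ring
        _ ≤ avg2 n (m+2) E q * d q ^ (m+1) * (z p * z q ^ m) := hbig
        _ = (avg2 n (m+2) E q * (z p * z q ^ m)) * d q ^ (m+1) := by ring
    exact le_of_mul_le_mul_right h2 (pow_pos (hd q) (m+1))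
  -- abbreviations
  set A := avg2 n (m+2) E p with hAdef
  set B := avg2 n (m+2) E q with hBdef
  have hA0 : 0 ≤ A := avg2_nonneg _ _ _ _
  have hB0 : 0 ≤ B := avg2_nonneg _ _ _ _
  have hba : z q ≤ z p := hp' q
  rw [hmk1]
  by_cases hb : z q = 0
  · -- eigenvector supported on p only, ρ = 0
    have hxj : ∀ j, j ≠ p → x j = 0 := by
      intro j hj
      have h1 : z j = 0 := le_antisymm (hb ▸ hq' j hj) (hz0 j)
      have h2 : ‖x j‖ = 0 := by
        rw [hxz j, h1, mul_zero]
      exact norm_eq_zero.mp h2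
    have hxp : x p ≠ 0 := by
      intro hp0
      apply hx0
      funext j
      by_cases hj : j = p
      · rw [hj, hp0]; rfl
      · rw [hxj j hj]; rfl
    have hρ0 : ρ = 0 := by
      have h2 := heig p
      have hzero : ∑ f : Fin (m+2-1) → Fin n,
          ((adjT n (m+2) E p f : ℝ) : ℂ) * ∏ a, x (f a) = 0 := by
        apply sum_eq_zero
        intro f _
        by_cases hfE : insert p (image f univ) ∈ E
        · have hchar := fiber_char n (m+2) hk hcard hfE rfl
          have ha0 : f ⟨0, by omega⟩ ≠ p := by
            intro h
            have : f ⟨0, by omega⟩ ∈ image f univ := mem_image_of_mem f (mem_univ _)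
            rw [hchar] at this
            exact (mem_erase.mp this).1 h
          have : ∏ a, x (f a) = 0 :=
            prod_eq_zero (mem_univ (⟨0, by omega⟩ : Fin (m+2-1))) (hxj _ ha0)
          rw [this, mul_zero]
        · have : adjT n (m+2) E p f = 0 := by unfold adjT; rw [if_neg hfE]
          rw [this]; simp
      rw [hzero] at h2
      have := h2.symm
      rcases mul_eq_zero.mp this with h | h
      · exact h
      · exact absurd h (pow_ne_zero _ hxp)
    have : r = 0 := by rw [← hρ, hρ0]; simp
    rw [this]
    rw [zero_pow (by omega : m + 2 ≠ 0)]
    exact mul_nonneg hM1nn (pow_nonneg hM2nn _)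
  · have hbpos : 0 < z q := lt_of_le_of_ne (hz0 q) (Ne.symm hb)
    have hapos : 0 < z p := lt_of_lt_of_le hbpos hba
    -- refined inequality at q : r * z q ≤ B * z p
    have ineq2' : r * z q ≤ B * z p := by
      have h2 : (r * z q) * z q ^ m ≤ (B * z p) * z q ^ m := by
        calc (r * z q) * z q ^ m = r * z q ^ (m+1) := by ring
          _ ≤ B * (z p * z q ^ m) := ineq2
          _ = (B * z p) * z q ^ m := by ring
      exact le_of_mul_le_mul_right h2 (pow_pos hbpos m)
    -- bound 1 : r^(m+2) ≤ A * B^(m+1)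
    have bound1 : r ^ (m+2) ≤ A * B ^ (m+1) := by
      have h2 : r ^ (m+2) * (z p ^ (m+1) * z q ^ (m+1))
          ≤ (A * B ^ (m+1)) * (z p ^ (m+1) * z q ^ (m+1)) := by
        calc r ^ (m+2) * (z p ^ (m+1) * z q ^ (m+1))
            = (r * z p ^ (m+1)) * (r * z q) ^ (m+1) := by ring
          _ ≤ (A * z q ^ (m+1)) * (B * z p) ^ (m+1) := by
              apply mul_le_mul ineq1 (pow_le_pow_left₀ (mul_nonneg hr0 (hz0 q)) ineq2' _)
                (pow_nonneg (mul_nonneg hr0 (hz0 q)) _)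
                (mul_nonneg hA0 (pow_nonneg (hz0 q) _))
          _ = (A * B ^ (m+1)) * (z p ^ (m+1) * z q ^ (m+1)) := by ring
      exact le_of_mul_le_mul_right h2 (mul_pos (pow_pos hapos _) (pow_pos hbpos _))
    -- bound 2 : r^(m+2) ≤ B * A^(m+1)
    have bound2 : r ^ (m+2) ≤ B * A ^ (m+1) := by
      have hba' : z q ^ ((m+1)*(m+1)) * z p ≤ z p ^ ((m+1)*(m+1)) * z q := by
        have hNN : (m+1)*(m+1) = (m*m + 2*m) + 1 := by ring
        rw [hNN, pow_succ, pow_succ]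
        calc z q ^ (m*m+2*m) * z q * z p = z q ^ (m*m+2*m) * (z q * z p) := by ring
          _ ≤ z p ^ (m*m+2*m) * (z q * z p) := by
              apply mul_le_mul_of_nonneg_right (pow_le_pow_left₀ (hz0 q) hba _)
                (mul_nonneg (hz0 q) (hz0 p))
          _ = z p ^ (m*m+2*m) * z p * z q := by ring
      have h2 : r ^ (m+2) * (z p ^ ((m+1)*(m+1)) * z q)
          ≤ (B * A ^ (m+1)) * (z p ^ ((m+1)*(m+1)) * z q) := by
        calc r ^ (m+2) * (z p ^ ((m+1)*(m+1)) * z q)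
            = (r * z p ^ (m+1)) ^ (m+1) * (r * z q) := by ring
          _ ≤ (A * z q ^ (m+1)) ^ (m+1) * (B * z p) := by
              apply mul_le_mul (pow_le_pow_left₀ (mul_nonneg hr0 (pow_nonneg (hz0 p) _)) ineq1 _)
                ineq2' (mul_nonneg hr0 (hz0 q))
                (pow_nonneg (mul_nonneg hA0 (pow_nonneg (hz0 q) _)) _)
          _ = (A ^ (m+1) * B) * (z q ^ ((m+1)*(m+1)) * z p) := by ring
          _ ≤ (A ^ (m+1) * B) * (z p ^ ((m+1)*(m+1)) * z q) := by
              apply mul_le_mul_of_nonneg_left hba'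
                (mul_nonneg (pow_nonneg hA0 _) hB0)
          _ = (B * A ^ (m+1)) * (z p ^ ((m+1)*(m+1)) * z q) := by ring
      exact le_of_mul_le_mul_right h2 (mul_pos (pow_pos hapos _) hbpos)
    -- case analysis on whether q is the first vertex
    by_cases hq0 : (q : ℕ) = 0
    · -- q = 0, so p ≥ 1 : A ≤ M2, B ≤ M1, use bound2
      have hpv : 1 ≤ (p : ℕ) := by
        rcases Nat.eq_zero_or_pos (p : ℕ) with h | h
        · exact absurd (Fin.ext (hq0.trans h.symm) : q = p) hqp
        · exact h
      have hA2 : A ≤ M2 := hsort ⟨1, by omega⟩ p (by rw [Fin.le_def]; exact hpv)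
      have hB1 : B ≤ M1 := hsort ⟨0, by omega⟩ q (by rw [Fin.le_def]; exact Nat.zero_le _)
      calc r ^ (m+2) ≤ B * A ^ (m+1) := bound2
        _ ≤ M1 * M2 ^ (m+1) := by
            apply mul_le_mul hB1 (pow_le_pow_left₀ hA0 hA2 _) (pow_nonneg hA0 _) hM1nn
    · -- q ≥ 1 : B ≤ M2, A ≤ M1, use bound1
      have hA1 : A ≤ M1 := hsort ⟨0, by omega⟩ p (by rw [Fin.le_def]; exact Nat.zero_le _)
      have hB2 : B ≤ M2 := hsort ⟨1, by omega⟩ q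
        (by rw [Fin.le_def]; exact Nat.one_le_iff_ne_zero.mpr hq0)
      calc r ^ (m+2) ≤ A * B ^ (m+1) := bound1
        _ ≤ M1 * M2 ^ (m+1) := by
            apply mul_le_mul hA1 (pow_le_pow_left₀ hB0 hB2 _) (pow_nonneg hB0 _) hM1nn
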